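/- For all vectors a, b, c, x, y ∈ ℝ³, det(a×b, b×c, x×y) = det(a,b,c)·det(b,x,y). (This computes the right twist of a Plücker coordinate Δ_{a,a+1,b} of a 3×n matrix, with a, a+1 cyclically adjacent indices, as a frozen Plücker coordinate times another Plücker coordinate.) -/
import Mathlib


/-- Determinant of the 3×3 real matrix with columns `a`, `b`, `c`. -/
noncomputable def det3 (a b c : Fin 3 → ℝ) : ℝ :=
  (Matrix.of ![a, b, c]).transpose.det

/-- The standard cross product on `ℝ³`. -/
def cross (a b : Fin 3 → ℝ) : Fin 3 → ℝ := crossProduct a b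

/-- Right twist of a Plücker coordinate with two cyclically adjacent indices:
`det(a×b, b×c, x×y) = det(a,b,c)·det(b,x,y)`. -/
theorem twist_adjacent_plucker (a b c x y : Fin 3 → ℝ) :
    det3 (cross a b) (cross b c) (cross x y) = det3 a b c * det3 b x y := by
  simp only [det3, cross, crossProduct, Matrix.det_transpose, Matrix.det_fin_three,
    Matrix.of_apply, Matrix.cons_val', Matrix.cons_val_zero, Matrix.cons_val_one,
    Matrix.head_cons, Matrix.cons_val_fin_one, Matrix.empty_val',
    Matrix.cons_val_two, Matrix.tail_cons, Matrix.vecHead, LinearMap.mk₂_apply, Pi.sub_apply, Pi.mul_apply]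
  ring
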